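/- Assume the setup, the stability assumption, and the γ-feasibility assumption, and let γ ∈ [γ_min, γ_max]. Then for every tangent space T' = T(L') at a rank-r symmetric matrix L' with ρ(T, T') ≤ ξ(T)/2, writing Y = Ω × T', the minimum gain of H* restricted to Ω ⊕ T' is bounded below: for all (M, N) ∈ Ω × T', ‖P_Y D H*(M+N)‖_γ ≥ (α/2) ‖(M,N)‖_γ. -/

import Mathlib

noncomputable section

open scoped BigOperators
open Matrix

namespace IsingSL

/-- The space of real `d × d` matrices.  Symmetry (membership in `Sym(d)`) is imposed
through explicit hypotheses `Matrix.IsSymm`. -/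
abbrev Mat (d : ℕ) := Matrix (Fin d) (Fin d) ℝ

/-- The trace inner product `⟨A, B⟩ = tr(Aᵀ B)`. -/
def minner {d : ℕ} (A B : Mat d) : ℝ := (Aᵀ * B).trace

/-- Entrywise `ℓ∞`-norm of a matrix. -/
def normInf {d : ℕ} (M : Mat d) : ℝ := ⨆ p : Fin d × Fin d, |M p.1 p.2|

/-- Entrywise `ℓ1`-norm of a matrix. -/
def norm1 {d : ℕ} (M : Mat d) : ℝ := ∑ i, ∑ j, |M i j|

/-- Euclidean norm of a vector. -/
def vnorm {d : ℕ} (v : Fin d → ℝ) : ℝ := Real.sqrt (∑ i, v i ^ 2)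

/-- Spectral norm (`ℓ2`-operator norm) of a matrix. -/
def specNorm {d : ℕ} (M : Mat d) : ℝ :=
  sSup {t | ∃ v : Fin d → ℝ, vnorm v ≤ 1 ∧ t = vnorm (M.mulVec v)}

/-- Nuclear norm of a matrix (sum of singular values), characterized via
trace duality with the spectral norm. -/
def nucNorm {d : ℕ} (M : Mat d) : ℝ :=
  sSup {t | ∃ B : Mat d, specNorm B ≤ 1 ∧ t = minner M B}

/-- The `γ`-norm of a pair of matrices: `‖(S, L)‖_γ = max {‖S‖_∞/γ, ‖L‖}`. -/
def ganorm {d : ℕ} (γ : ℝ) (S L : Mat d) : ℝ := max (normInf S / γ) (specNorm L)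

/-- The `{0,1}`-vector corresponding to `x : Fin d → Bool`. -/
def b2r {d : ℕ} (x : Fin d → Bool) : Fin d → ℝ := fun i => if x i then 1 else 0

/-- The sufficient statistics `Φ(x) = x xᵀ` for `x ∈ {0,1}^d`. -/
def phi {d : ℕ} (x : Fin d → Bool) : Mat d := Matrix.of fun i j => b2r x i * b2r x j

/-- The log-partition function `a(Θ)` of the pairwise Ising model. -/
def logA {d : ℕ} (Θ : Mat d) : ℝ :=
  Real.log (∑ x : Fin d → Bool, Real.exp (minner Θ (phi x)))

/-- The Ising probability mass function `p(x) = exp(⟨Θ, Φ(x)⟩ - a(Θ))`. -/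
def isingPMF {d : ℕ} (Θ : Mat d) (x : Fin d → Bool) : ℝ :=
  Real.exp (minner Θ (phi x) - logA Θ)

/-- `Φ* = E_Θ[Φ]`, the expected sufficient statistics; this is the gradient `∇a(Θ)`
of the log-partition function w.r.t. the trace inner product. -/
def meanPhi {d : ℕ} (Θ : Mat d) : Mat d := ∑ x : Fin d → Bool, isingPMF Θ x • phi x

/-- The Hessian `∇²a(Θ)` of the log-partition function as a linear operator on matrices;
it is the covariance operator `M ↦ E[⟨Φ,M⟩Φ] - ⟨E[Φ],M⟩E[Φ]` of the sufficient statistics. -/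
def hessA {d : ℕ} (Θ : Mat d) (M : Mat d) : Mat d :=
  (∑ x : Fin d → Bool, (isingPMF Θ x * minner (phi x) M) • phi x)
    - minner (meanPhi Θ) M • meanPhi Θ

/-- The empirical second-moment matrix `Φ^n` of a sample. -/
def empPhi {d n : ℕ} (xs : Fin n → (Fin d → Bool)) : Mat d :=
  (n : ℝ)⁻¹ • ∑ k, phi (xs k)

/-- The negative log-likelihood `ℓ(Θ) = a(Θ) - ⟨Θ, Φ^n⟩`. -/
def nll {d : ℕ} (Phin Θ : Mat d) : ℝ := logA Θ - minner Θ Phin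

/-- The probability of the event `E` under `n` i.i.d. samples from the Ising
distribution with parameter `Θ`. -/
def samplesProb {d : ℕ} (Θ : Mat d) (n : ℕ) (E : Set (Fin n → (Fin d → Bool))) : ℝ :=
  ∑ xs : Fin n → (Fin d → Bool), E.indicator (fun ys => ∏ k, isingPMF Θ (ys k)) xs

/-- Probability vectors on `{0,1}^d`. -/
def IsProbVec {d : ℕ} (p : (Fin d → Bool) → ℝ) : Prop :=
  (∀ x, 0 ≤ p x) ∧ ∑ x : Fin d → Bool, p x = 1

/-- The (Shannon) entropy `H(p) = -Σ_x p(x) log p(x)` (with `0 log 0 = 0`). -/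
def entropy {d : ℕ} (p : (Fin d → Bool) → ℝ) : ℝ :=
  -∑ x : Fin d → Bool, p x * Real.log (p x)

/-- The expectation `E_p[Φ]` of the sufficient statistics under `p`. -/
def Ephi {d : ℕ} (p : (Fin d → Bool) → ℝ) : Mat d :=
  ∑ x : Fin d → Bool, p x • phi x

/-- The linear identification of `d × d` matrices with the euclidean space on `d·d`
coordinates; under this identification the euclidean inner product corresponds to the
trace inner product on matrices. -/
def matEuclid (d : ℕ) : Mat d ≃ₗ[ℝ] EuclideanSpace ℝ (Fin d × Fin d) where
  toFun M := WithLp.toLp 2 (fun p => M p.1 p.2)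
  invFun v := Matrix.of fun i j => v (i, j)
  map_add' _ _ := rfl
  map_smul' _ _ := rfl
  left_inv _ := rfl
  right_inv _ := rfl

/-- Orthogonal projection onto a subspace `V` of `Mat d`, w.r.t. the trace inner product. -/
def proj {d : ℕ} (V : Submodule ℝ (Mat d)) (M : Mat d) : Mat d :=
  (matEuclid d).symm
    ((Submodule.orthogonalProjectionOnto (V.map ((matEuclid d) : Mat d →ₗ[ℝ] EuclideanSpace ℝ (Fin d × Fin d)))
      ((matEuclid d) M) : EuclideanSpace ℝ (Fin d × Fin d)))

/-- Projection onto the orthogonal complement of `V`. -/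
def projPerp {d : ℕ} (V : Submodule ℝ (Mat d)) (M : Mat d) : Mat d := M - proj V M

/-- The twisting `ρ(T, T') = max_{‖M‖=1} ‖(P_T - P_{T'}) M‖` between two subspaces. -/
def rho {d : ℕ} (T T' : Submodule ℝ (Mat d)) : ℝ :=
  sSup {t | ∃ M : Mat d, specNorm M = 1 ∧ t = specNorm (proj T M - proj T' M)}

/-- `ξ(T)`: the smallest `ξ` with `‖M‖_∞ ≤ ξ ‖M‖` for all `M ∈ T`. -/
def xi {d : ℕ} (T : Submodule ℝ (Mat d)) : ℝ :=
  sInf {c | ∀ M ∈ T, normInf M ≤ c * specNorm M}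

/-- `μ(Ω)`: the smallest `μ` with `‖N‖ ≤ μ ‖N‖_∞` for all `N ∈ Ω`. -/
def mu {d : ℕ} (Om : Submodule ℝ (Mat d)) : ℝ :=
  sInf {c | ∀ N ∈ Om, specNorm N ≤ c * normInf N}

/-- `Ω(S) = {M ∈ Sym(d) : supp(M) ⊆ supp(S)}`, the tangent space at `S` to the variety
of symmetric matrices with at most `|supp S|` nonzero entries. -/
def OmegaS {d : ℕ} (S : Mat d) : Submodule ℝ (Mat d) where
  carrier := {M | M.IsSymm ∧ ∀ i j, S i j = 0 → M i j = 0}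
  add_mem' := by
    rintro a b ⟨ha, ha0⟩ ⟨hb, hb0⟩
    refine ⟨?_, fun i j h => ?_⟩
    · show (a + b)ᵀ = a + b
      rw [Matrix.transpose_add, ha, hb]
    · show a i j + b i j = 0
      rw [ha0 i j h, hb0 i j h, add_zero]
  zero_mem' := by
    refine ⟨?_, fun i j _ => rfl⟩
    show (0 : Mat _)ᵀ = 0
    rw [Matrix.transpose_zero]
  smul_mem' := by
    rintro c a ⟨ha, ha0⟩
    refine ⟨?_, fun i j h => ?_⟩
    · show (c • a)ᵀ = c • a
      rw [Matrix.transpose_smul, ha]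
    · show c * a i j = 0
      rw [ha0 i j h, mul_zero]

/-- `T(L) = {U Xᵀ + X Uᵀ : X ∈ ℝ^{d×r}}`, the tangent space at `L = U D Uᵀ` to the
variety of symmetric matrices of rank at most `r`. -/
def TSpace {d r : ℕ} (U : Matrix (Fin d) (Fin r) ℝ) : Submodule ℝ (Mat d) where
  carrier := {M | ∃ X : Matrix (Fin d) (Fin r) ℝ, M = U * Xᵀ + X * Uᵀ}
  add_mem' := by
    rintro a b ⟨X, rfl⟩ ⟨Y, rfl⟩
    exact ⟨X + Y, by rw [Matrix.transpose_add, Matrix.mul_add, Matrix.add_mul]; abel⟩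
  zero_mem' := ⟨0, by simp⟩
  smul_mem' := by
    rintro c a ⟨X, rfl⟩
    exact ⟨c • X, by rw [Matrix.transpose_smul, Matrix.mul_smul, Matrix.smul_mul, smul_add]⟩

/-- `T'` is the tangent space `T(L')` at some rank-`r` symmetric matrix
`L' = U D Uᵀ` (restricted eigenvalue decomposition: `U` with orthonormal columns,
`D` invertible diagonal). -/
def IsTangentSpace (d r : ℕ) (T' : Submodule ℝ (Mat d)) : Prop :=
  ∃ (U : Matrix (Fin d) (Fin r) ℝ) (D : Matrix (Fin r) (Fin r) ℝ),
    Uᵀ * U = 1 ∧ D.IsDiag ∧ IsUnit D.det ∧ T' = TSpace U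

/-- A solution of the tangent-space constrained problem
`min_{(S,L) ∈ Om × T'} ℓ(S+L) + λ(γ‖S‖₁ + ‖L‖_*)`. -/
def IsYSol {d : ℕ} (Om T' : Submodule ℝ (Mat d)) (Phin : Mat d) (lam γ : ℝ)
    (p : Mat d × Mat d) : Prop :=
  p.1 ∈ Om ∧ p.2 ∈ T' ∧
    ∀ q : Mat d × Mat d, q.1 ∈ Om → q.2 ∈ T' →
      nll Phin (p.1 + p.2) + lam * (γ * norm1 p.1 + nucNorm p.2) ≤
        nll Phin (q.1 + q.2) + lam * (γ * norm1 q.1 + nucNorm q.2)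

/-- A solution of the convex program
`min_{S, L ∈ Sym(d), L ⪰ 0} ℓ(S+L) + λ(γ‖S‖₁ + tr L)`. -/
def IsSLSol {d : ℕ} (Phin : Mat d) (lam γ : ℝ) (p : Mat d × Mat d) : Prop :=
  p.1.IsSymm ∧ p.2.PosSemidef ∧
    ∀ q : Mat d × Mat d, q.1.IsSymm → q.2.PosSemidef →
      nll Phin (p.1 + p.2) + lam * (γ * norm1 p.1 + p.2.trace) ≤
        nll Phin (q.1 + q.2) + lam * (γ * norm1 q.1 + q.2.trace)

/-- The setup: a nonzero symmetric matrix `S*` and a positive-semidefinite `L*` with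
restricted eigenvalue decomposition `L* = U D Uᵀ` (so `L*` has rank `r`). -/
structure Setup (d r : ℕ) where
  Sstar : Mat d
  U : Matrix (Fin d) (Fin r) ℝ
  Dg : Matrix (Fin r) (Fin r) ℝ
  hU : Uᵀ * U = 1
  hDdiag : Dg.IsDiag
  hDunit : IsUnit Dg.det
  hSsymm : Sstar.IsSymm
  hSne : Sstar ≠ 0
  hLpsd : (U * Dg * Uᵀ).PosSemidef

namespace Setup

variable {d r : ℕ} (C : Setup d r)

/-- `L* = U D Uᵀ`. -/
def Lstar : Mat d := C.U * C.Dg * C.Uᵀ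

/-- `Θ* = S* + L*`. -/
def Thstar : Mat d := C.Sstar + C.Lstar

/-- `Ω = Ω(S*)`. -/
def Om : Submodule ℝ (Mat d) := OmegaS C.Sstar

/-- `T = T(L*)`. -/
def Tt : Submodule ℝ (Mat d) := TSpace C.U

/-- `H* = ∇²a(Θ*)`, the Hessian of the log-partition function at `Θ*`. -/
def Hop : Mat d → Mat d := hessA C.Thstar

/-- `‖H*‖`, the operator norm of `H*` w.r.t. the spectral norm. -/
def HopNorm : ℝ := sSup {t | ∃ M : Mat d, specNorm M = 1 ∧ t = specNorm (C.Hop M)}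

/-- `ξ(T)`. -/
def xiT : ℝ := xi C.Tt

/-- `μ(Ω)`. -/
def muOm : ℝ := mu C.Om

/-- `α_Ω = min {‖P_Ω H*(M)‖_∞ : M ∈ Ω, ‖M‖_∞ = 1}`. -/
def alphaOm : ℝ :=
  sInf {t | ∃ M, M ∈ C.Om ∧ normInf M = 1 ∧ t = normInf (proj C.Om (C.Hop M))}

/-- `α_{T,ε}`. -/
def alphaT (ε : ℝ) : ℝ :=
  sInf {t | ∃ T' : Submodule ℝ (Mat d), IsTangentSpace d r T' ∧ rho C.Tt T' ≤ ε ∧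
    ∃ M, M ∈ T' ∧ specNorm M = 1 ∧ t = specNorm (proj T' (C.Hop M))}

/-- `δ_Ω = max {‖P_{Ω^⊥} H*(M)‖_∞ : M ∈ Ω, ‖M‖_∞ = 1}`. -/
def deltaOm : ℝ :=
  sSup {t | ∃ M, M ∈ C.Om ∧ normInf M = 1 ∧ t = normInf (projPerp C.Om (C.Hop M))}

/-- `δ_{T,ε}`. -/
def deltaT (ε : ℝ) : ℝ :=
  sSup {t | ∃ T' : Submodule ℝ (Mat d), IsTangentSpace d r T' ∧ rho C.Tt T' ≤ ε ∧
    ∃ M, M ∈ T' ∧ specNorm M = 1 ∧ t = specNorm (projPerp T' (C.Hop M))}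

/-- `β_Ω = max {‖H*(M)‖ : M ∈ Ω, ‖M‖ = 1}`. -/
def betaOm : ℝ :=
  sSup {t | ∃ M, M ∈ C.Om ∧ specNorm M = 1 ∧ t = specNorm (C.Hop M)}

/-- `β_T`. -/
def betaT : ℝ :=
  sSup {t | ∃ T' : Submodule ℝ (Mat d), IsTangentSpace d r T' ∧ rho C.Tt T' ≤ C.xiT / 2 ∧
    ∃ M, M ∈ T' ∧ normInf M = 1 ∧ t = normInf (C.Hop M)}

/-- `β = max {β_Ω, β_T}`. -/
def betaC : ℝ := max C.betaOm C.betaT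

/-- `α = min {α_Ω, α_{T,ξ(T)/2}}`. -/
def alphaC : ℝ := min C.alphaOm (C.alphaT (C.xiT / 2))

/-- `δ = max {δ_Ω, δ_{T,ξ(T)/2}}`. -/
def deltaC : ℝ := max C.deltaOm (C.deltaT (C.xiT / 2))

/-- The stability assumption: `α > 0` and `δ/α ≤ 1 - 2ν` for some `ν ∈ (0, 1/2]`. -/
def Stability (ν : ℝ) : Prop :=
  0 < C.alphaC ∧ 0 < ν ∧ ν ≤ 1 / 2 ∧ C.deltaC / C.alphaC ≤ 1 - 2 * ν

/-- `γ_min = 3β(2-ν)ξ(T)/(να)`. -/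
def gammaMin (ν : ℝ) : ℝ := 3 * C.betaC * (2 - ν) * C.xiT / (ν * C.alphaC)

/-- `γ_max = να/(2β(2-ν)μ(Ω))`. -/
def gammaMax (ν : ℝ) : ℝ := ν * C.alphaC / (2 * C.betaC * (2 - ν) * C.muOm)

/-- The `γ`-feasibility assumption: the range `[γ_min, γ_max]` is non-empty. -/
def GammaFeasible (ν : ℝ) : Prop := C.gammaMin ν ≤ C.gammaMax ν

/-- `ω = max {να/(3β(2-ν)), 1}`. -/
def omg (ν : ℝ) : ℝ := max (ν * C.alphaC / (3 * C.betaC * (2 - ν))) 1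

/-- `c₂ = 40/α + 1/‖H*‖`. -/
def c2 : ℝ := 40 / C.alphaC + 1 / C.HopNorm

/-- `c₃ = (6(2-ν)/ν + 1) c₂² ‖H*‖ ω`. -/
def c3 (ν : ℝ) : ℝ := (6 * (2 - ν) / ν + 1) * C.c2 ^ 2 * C.HopNorm * C.omg ν

/-- `c₄ = c₂ + 3αc₂²(2-ν)/(16(3-ν))`. -/
def c4 (ν : ℝ) : ℝ := C.c2 + 3 * C.alphaC * C.c2 ^ 2 * (2 - ν) / (16 * (3 - ν))

/-- `c₅ = max {c₃, c₄}`. -/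
def c5 (ν : ℝ) : ℝ := max (C.c3 ν) (C.c4 ν)

/-- `c₆ = ναc₂/(2β(2-ν))`. -/
def c6 (ν : ℝ) : ℝ := ν * C.alphaC * C.c2 / (2 * C.betaC * (2 - ν))

/-- `c₀ = 2 l(r₀) ω max{να/(2β(2-ν)), 1}²`. -/
def c0 (ν l0 : ℝ) : ℝ :=
  2 * l0 * C.omg ν * (max (ν * C.alphaC / (2 * C.betaC * (2 - ν))) 1) ^ 2

/-- `c₁ = max{1, να/(2β(2-ν))}⁻¹ r₀/2`. -/
def c1 (ν r0 : ℝ) : ℝ :=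
  (max 1 (ν * C.alphaC / (2 * C.betaC * (2 - ν))))⁻¹ * r0 / 2

/-- `s_min`, the smallest absolute value of a nonzero entry of `S*`. -/
def smin : ℝ := sInf {t | ∃ i j, C.Sstar i j ≠ 0 ∧ t = |C.Sstar i j|}

/-- `σ_min`, the smallest nonzero eigenvalue of `L*`. -/
def sigmin : ℝ := sInf {t | t ≠ 0 ∧ ∃ i, t = C.hLpsd.1.eigenvalues i}

/-- The gap assumption: `s_min ≥ c₆λ_n/μ(Ω)` and `σ_min ≥ c₅λ_n/ξ(T)²`. -/
def GapAssumption (ν lam : ℝ) : Prop :=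
  C.c6 ν * lam / C.muOm ≤ C.smin ∧ C.c5 ν * lam / C.xiT ^ 2 ≤ C.sigmin

/-- `l0` is a Lipschitz constant (in operator norm w.r.t. the spectral norm) of the
Hessian `∇²a` on the ball `{Θ : ‖Θ - Θ*‖ ≤ r0}`. -/
def HessLip (r0 l0 : ℝ) : Prop :=
  ∀ Θ Θ' : Mat d, specNorm (Θ - C.Thstar) ≤ r0 → specNorm (Θ' - C.Thstar) ≤ r0 →
    ∀ M : Mat d, specNorm (hessA Θ M - hessA Θ' M) ≤ l0 * specNorm (Θ - Θ') * specNorm M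

/-- The correct model set `M`. -/
def Mset (γ ν lam : ℝ) : Set (Mat d × Mat d) :=
  {p | p.1 ∈ C.Om ∧ p.2.IsSymm ∧ p.2.rank ≤ C.Lstar.rank ∧
    ganorm γ (C.Hop ((p.1 - C.Sstar) + (p.2 - C.Lstar)))
      (C.Hop ((p.1 - C.Sstar) + (p.2 - C.Lstar))) ≤ 9 * lam ∧
    specNorm (projPerp C.Tt (p.2 - C.Lstar)) ≤ C.xiT * lam / (C.omg ν * C.HopNorm)}

end Setup

/-! ### Auxiliary lemmas -/

section Aux

open scoped Matrix.Norms.L2Operator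

variable {d : ℕ}

lemma vnorm_eq (v : Fin d → ℝ) : vnorm v = ‖(EuclideanSpace.equiv (Fin d) ℝ).symm v‖ := by
  rw [EuclideanSpace.norm_eq]
  simp [vnorm, Real.norm_eq_abs, sq_abs]

lemma specNorm_eq (M : Mat d) : specNorm M = ‖M‖ := by
  rw [Matrix.l2_opNorm_def, ← ContinuousLinearMap.sSup_unitClosedBall_eq_norm]
  apply congrArg sSup
  ext t
  simp only [Set.mem_setOf_eq, Set.mem_image, Metric.mem_closedBall, dist_zero_right]
  constructor
  · rintro ⟨v, hv, rfl⟩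
    refine ⟨(EuclideanSpace.equiv (Fin d) ℝ).symm v, by rwa [← vnorm_eq], ?_⟩
    rw [vnorm_eq]
    rfl
  · rintro ⟨x, hx, rfl⟩
    refine ⟨(EuclideanSpace.equiv (Fin d) ℝ) x, ?_, ?_⟩
    · rw [vnorm_eq]; exact hx
    · rw [vnorm_eq]; rfl

lemma abs_le_normInf (M : Mat d) (i j : Fin d) : |M i j| ≤ normInf M :=
  le_ciSup (f := fun p : Fin d × Fin d => |M p.1 p.2|)
    (Set.Finite.bddAbove (Set.finite_range _)) (i, j)

lemma normInf_nonneg (M : Mat d) : 0 ≤ normInf M :=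
  Real.iSup_nonneg fun _ => abs_nonneg _

lemma normInf_le {M : Mat d} {c : ℝ} (h0 : 0 ≤ c) (h : ∀ i j, |M i j| ≤ c) :
    normInf M ≤ c := by
  rcases isEmpty_or_nonempty (Fin d × Fin d) with he | hn
  · rw [normInf, Real.iSup_of_isEmpty]; exact h0
  · exact ciSup_le fun p => h p.1 p.2

lemma eq_zero_of_normInf_eq_zero {M : Mat d} (h : normInf M = 0) : M = 0 := by
  ext i j
  have := abs_le_normInf M i j
  rw [h] at this
  simpa using le_antisymm this (abs_nonneg _)

lemma normInf_smul (c : ℝ) (M : Mat d) : normInf (c • M) = |c| * normInf M := by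
  have key : ∀ (a : ℝ) (N : Mat d), normInf (a • N) ≤ |a| * normInf N := by
    intro a N
    refine normInf_le (mul_nonneg (abs_nonneg _) (normInf_nonneg _)) fun i j => ?_
    have : |(a • N) i j| = |a| * |N i j| := by
      simp [Matrix.smul_apply, abs_mul]
    rw [this]
    exact mul_le_mul_of_nonneg_left (abs_le_normInf N i j) (abs_nonneg _)
  rcases eq_or_ne c 0 with rfl | hc
  · simp only [zero_smul, abs_zero, zero_mul]
    refine le_antisymm (normInf_le le_rfl (by simp)) (normInf_nonneg _)
  · refine le_antisymm (key c M) ?_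
    have h2 := key c⁻¹ (c • M)
    rw [smul_smul, inv_mul_cancel₀ hc, one_smul] at h2
    have habs : 0 < |c| := abs_pos.mpr hc
    rw [abs_inv] at h2
    calc |c| * normInf M ≤ |c| * (|c|⁻¹ * normInf (c • M)) :=
          mul_le_mul_of_nonneg_left h2 (abs_nonneg _)
      _ = normInf (c • M) := by field_simp

lemma normInf_neg (M : Mat d) : normInf (-M) = normInf M := by
  have := normInf_smul (-1 : ℝ) M
  simpa using this

lemma normInf_add_le (A B : Mat d) : normInf (A + B) ≤ normInf A + normInf B := by
  refine normInf_le (add_nonneg (normInf_nonneg _) (normInf_nonneg _)) fun i j => ?_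
  calc |(A + B) i j| ≤ |A i j| + |B i j| := abs_add_le _ _
    _ ≤ normInf A + normInf B := add_le_add (abs_le_normInf _ _ _) (abs_le_normInf _ _ _)

lemma normInf_sub_le (A B : Mat d) : normInf A - normInf B ≤ normInf (A + B) := by
  have h := normInf_add_le (A + B) (-B)
  simp only [add_neg_cancel_right, normInf_neg] at h
  linarith

lemma abs_le_vnorm (v : Fin d → ℝ) (i : Fin d) : |v i| ≤ vnorm v := by
  rw [vnorm, ← Real.sqrt_sq_eq_abs]
  exact Real.sqrt_le_sqrt (Finset.single_le_sum (f := fun k => v k ^ 2)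
    (fun k _ => sq_nonneg _) (Finset.mem_univ i))

lemma vnorm_nonneg (v : Fin d → ℝ) : 0 ≤ vnorm v := Real.sqrt_nonneg _

lemma vnorm_le_sum_abs (v : Fin d → ℝ) : vnorm v ≤ ∑ i, |v i| := by
  rw [vnorm]
  have h1 : ∑ i, v i ^ 2 ≤ (∑ i, |v i|) ^ 2 := by
    rw [sq (∑ i, |v i|), Finset.sum_mul]
    refine Finset.sum_le_sum fun i _ => ?_
    rw [sq, ← abs_mul_self (v i), abs_mul]
    exact mul_le_mul_of_nonneg_left
      (Finset.single_le_sum (fun k _ => abs_nonneg (v k)) (Finset.mem_univ i)) (abs_nonneg _)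
  calc Real.sqrt (∑ i, v i ^ 2) ≤ Real.sqrt ((∑ i, |v i|) ^ 2) := Real.sqrt_le_sqrt h1
    _ = ∑ i, |v i| := Real.sqrt_sq (Finset.sum_nonneg fun i _ => abs_nonneg _)

lemma vnorm_single (j : Fin d) : vnorm (Pi.single j 1) = 1 := by
  rw [vnorm]
  have : ∀ i, (Pi.single j 1 : Fin d → ℝ) i ^ 2 = if i = j then 1 else 0 := by
    intro i
    rcases eq_or_ne i j with rfl | h
    · simp
    · simp [Pi.single_apply, h]
  rw [Finset.sum_congr rfl fun i _ => this i]
  simp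

lemma vnorm_mulVec_le (M : Mat d) (v : Fin d → ℝ) :
    vnorm (M.mulVec v) ≤ specNorm M * vnorm v := by
  rw [vnorm_eq, vnorm_eq, specNorm_eq]
  exact Matrix.l2_opNorm_mulVec M ((EuclideanSpace.equiv (Fin d) ℝ).symm v)

lemma normInf_le_specNorm (M : Mat d) : normInf M ≤ specNorm M := by
  refine normInf_le (by rw [specNorm_eq]; exact norm_nonneg _) fun i j => ?_
  have h1 : M.mulVec (Pi.single j 1) i = M i j := by
    simp [Matrix.mulVec_single]
  calc |M i j| = |M.mulVec (Pi.single j 1) i| := by rw [h1]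
    _ ≤ vnorm (M.mulVec (Pi.single j 1)) := abs_le_vnorm _ _
    _ ≤ specNorm M * vnorm (Pi.single j 1) := vnorm_mulVec_le _ _
    _ = specNorm M := by rw [vnorm_single, mul_one]

lemma norm1_nonneg (M : Mat d) : 0 ≤ norm1 M :=
  Finset.sum_nonneg fun _ _ => Finset.sum_nonneg fun _ _ => abs_nonneg _

lemma specNorm_le_norm1 (M : Mat d) : specNorm M ≤ norm1 M := by
  rw [specNorm_eq, Matrix.l2_opNorm_def]
  refine ContinuousLinearMap.opNorm_le_bound _ (norm1_nonneg M) fun x => ?_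
  have key : vnorm (M.mulVec ((EuclideanSpace.equiv (Fin d) ℝ) x)) ≤ norm1 M * vnorm x := by
    set v : Fin d → ℝ := (EuclideanSpace.equiv (Fin d) ℝ) x with hv
    have hvx : vnorm v = vnorm (x : Fin d → ℝ) := rfl
    calc vnorm (M.mulVec v) ≤ ∑ i, |(M.mulVec v) i| := vnorm_le_sum_abs _
      _ ≤ ∑ i, ∑ j, |M i j| * vnorm v := by
          refine Finset.sum_le_sum fun i _ => ?_
          calc |(M.mulVec v) i| = |∑ j, M i j * v j| := by
                simp [Matrix.mulVec, dotProduct]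
            _ ≤ ∑ j, |M i j * v j| := Finset.abs_sum_le_sum_abs _ _
            _ ≤ ∑ j, |M i j| * vnorm v := by
                refine Finset.sum_le_sum fun j _ => ?_
                rw [abs_mul]
                exact mul_le_mul_of_nonneg_left (abs_le_vnorm v j) (abs_nonneg _)
      _ = norm1 M * vnorm v := by rw [norm1, Finset.sum_mul]; simp [Finset.sum_mul]
    
  calc ‖(Matrix.toEuclideanLin.trans LinearMap.toContinuousLinearMap M) x‖
      = vnorm (M.mulVec ((EuclideanSpace.equiv (Fin d) ℝ) x)) := by rw [vnorm_eq]; rfl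
    _ ≤ norm1 M * vnorm x := key
    _ = norm1 M * ‖x‖ := by rw [vnorm_eq]; rfl

lemma norm1_le_normInf (M : Mat d) : norm1 M ≤ (d : ℝ)^2 * normInf M := by
  calc norm1 M ≤ ∑ _i : Fin d, ∑ _j : Fin d, normInf M :=
        Finset.sum_le_sum fun i _ => Finset.sum_le_sum fun j _ => abs_le_normInf M i j
    _ = (d : ℝ)^2 * normInf M := by
        simp [Finset.sum_const, Finset.card_univ]
        ring

lemma specNorm_le_normInf (M : Mat d) : specNorm M ≤ (d : ℝ)^2 * normInf M :=
  (specNorm_le_norm1 M).trans (norm1_le_normInf M)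

lemma minner_eq_sum (A B : Mat d) : minner A B = ∑ i, ∑ j, A i j * B i j := by
  rw [minner, Matrix.trace]
  simp only [Matrix.diag_apply, Matrix.mul_apply, Matrix.transpose_apply]
  rw [Finset.sum_comm]

lemma minner_add_right (A B C : Mat d) : minner A (B + C) = minner A B + minner A C := by
  simp only [minner_eq_sum, Matrix.add_apply, mul_add, Finset.sum_add_distrib]

lemma minner_smul_right (c : ℝ) (A B : Mat d) : minner A (c • B) = c * minner A B := by
  simp only [minner_eq_sum, Matrix.smul_apply, smul_eq_mul, Finset.mul_sum]
  congr 1; ext i; congr 1; ext j; ring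

lemma minner_add_left (A B C : Mat d) : minner (A + B) C = minner A C + minner B C := by
  simp only [minner_eq_sum, Matrix.add_apply, add_mul, Finset.sum_add_distrib]

lemma minner_zero_left (B : Mat d) : minner 0 B = 0 := by
  simp [minner_eq_sum]

lemma sum_antisym_eq_zero {g : Fin d → Fin d → ℝ} (h : ∀ i j, g i j = - g j i) :
    ∑ i, ∑ j, g i j = 0 := by
  have h1 : ∑ i, ∑ j, g i j = ∑ j, ∑ i, g i j := Finset.sum_comm
  have h2 : ∑ j, ∑ i, g i j = ∑ j, ∑ i, -(g j i) := by
    congr 1; ext j; congr 1; ext i; exact h i j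
  have h3 : ∑ j, ∑ i, -(g j i) = - ∑ j, ∑ i, g j i := by
    simp [Finset.sum_neg_distrib]
  have := h1.trans (h2.trans h3)
  linarith

lemma hessA_add (Θ M N : Mat d) : hessA Θ (M + N) = hessA Θ M + hessA Θ N := by
  simp only [hessA, minner_add_right, mul_add, add_smul, Finset.sum_add_distrib]
  abel

lemma hessA_smul (Θ : Mat d) (c : ℝ) (M : Mat d) : hessA Θ (c • M) = c • hessA Θ M := by
  unfold hessA
  rw [smul_sub, Finset.smul_sum]
  congr 1
  · refine Finset.sum_congr rfl fun x _ => ?_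
    rw [minner_smul_right, smul_smul]
    congr 1
    ring
  · rw [minner_smul_right, smul_smul]

lemma hessA_zero (Θ : Mat d) : hessA Θ 0 = 0 := by
  have := hessA_smul Θ 0 0
  simpa using this

/-- The Hessian as a linear map. -/
def hessLM (Θ : Mat d) : Mat d →ₗ[ℝ] Mat d where
  toFun := hessA Θ
  map_add' := hessA_add Θ
  map_smul' := hessA_smul Θ

lemma exists_hess_bound (Θ : Mat d) : ∃ K : ℝ, 0 ≤ K ∧
    ∀ M : Mat d, specNorm (hessA Θ M) ≤ K * specNorm M := by
  let f := LinearMap.toContinuousLinearMap (hessLM Θ)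
  refine ⟨‖f‖, ContinuousLinearMap.opNorm_nonneg f, fun M => ?_⟩
  rw [specNorm_eq, specNorm_eq]
  exact f.le_opNorm M

lemma euclid_abs_le {ι : Type*} [Fintype ι] (x : EuclideanSpace ℝ ι) (i : ι) :
    |x i| ≤ ‖x‖ := by
  rw [EuclideanSpace.norm_eq, ← Real.sqrt_sq_eq_abs]
  refine Real.sqrt_le_sqrt ?_
  have := Finset.single_le_sum (f := fun k => ‖x k‖ ^ 2) (fun k _ => sq_nonneg _)
    (Finset.mem_univ i)
  simpa [Real.norm_eq_abs, sq_abs] using this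

lemma euclid_norm_le_sum {ι : Type*} [Fintype ι] (x : EuclideanSpace ℝ ι) :
    ‖x‖ ≤ ∑ i, |x i| := by
  rw [EuclideanSpace.norm_eq]
  have h1 : ∑ i, ‖x i‖ ^ 2 ≤ (∑ i, |x i|) ^ 2 := by
    rw [sq (∑ i, |x i|), Finset.sum_mul]
    refine Finset.sum_le_sum fun i _ => ?_
    rw [Real.norm_eq_abs, sq]
    exact mul_le_mul_of_nonneg_left
      (Finset.single_le_sum (fun k _ => abs_nonneg (x k)) (Finset.mem_univ i)) (abs_nonneg _)
  calc Real.sqrt (∑ i, ‖x i‖ ^ 2) ≤ Real.sqrt ((∑ i, |x i|) ^ 2) := Real.sqrt_le_sqrt h1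
    _ = ∑ i, |x i| := Real.sqrt_sq (Finset.sum_nonneg fun i _ => abs_nonneg _)

lemma proj_eq_of {V : Submodule ℝ (Mat d)} {X p : Mat d} (hp : p ∈ V)
    (h : ∀ q ∈ V, minner (X - p) q = 0) : proj V X = p := by
  have hm : (matEuclid d) p ∈
      V.map ((matEuclid d) : Mat d →ₗ[ℝ] EuclideanSpace ℝ (Fin d × Fin d)) :=
    ⟨p, hp, rfl⟩
  have ho : ∀ w ∈ V.map ((matEuclid d) : Mat d →ₗ[ℝ] EuclideanSpace ℝ (Fin d × Fin d)),
      (inner ℝ ((matEuclid d) X - (matEuclid d) p) w : ℝ) = 0 := by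
    rintro w ⟨q, hq, rfl⟩
    have hq0 := h q hq
    rw [minner_eq_sum] at hq0
    have : (inner ℝ ((matEuclid d) X - (matEuclid d) p) ((matEuclid d : Mat d →ₗ[ℝ] _) q) : ℝ)
        = ∑ pt : Fin d × Fin d, (X - p) pt.1 pt.2 * q pt.1 pt.2 := by
      rw [PiLp.inner_apply]
      refine Finset.sum_congr rfl fun pt _ => ?_
      simp [RCLike.inner_apply, starRingEnd_apply, matEuclid, Matrix.sub_apply]
      exact mul_comm _ _
    rw [this, Fintype.sum_prod_type]
    exact hq0
  have key := Submodule.eq_starProjection_of_mem_of_inner_eq_zero hm ho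
  rw [proj, ← Submodule.starProjection_apply, key]
  exact (matEuclid d).symm_apply_apply p

lemma proj_mem (V : Submodule ℝ (Mat d)) (X : Mat d) : proj V X ∈ V := by
  rw [proj]
  obtain ⟨q, hq, hqe⟩ := (Submodule.orthogonalProjectionOnto
    (V.map ((matEuclid d) : Mat d →ₗ[ℝ] EuclideanSpace ℝ (Fin d × Fin d)))
    ((matEuclid d) X)).2
  rw [← hqe]
  simpa using hq

lemma proj_of_mem {V : Submodule ℝ (Mat d)} {M : Mat d} (h : M ∈ V) : proj V M = M :=
  proj_eq_of h (by intro q hq; simp [sub_self, minner_zero_left])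

lemma proj_add (V : Submodule ℝ (Mat d)) (A B : Mat d) :
    proj V (A + B) = proj V A + proj V B := by
  simp only [proj, map_add, Submodule.coe_add]

lemma proj_smul (V : Submodule ℝ (Mat d)) (c : ℝ) (A : Mat d) :
    proj V (c • A) = c • proj V A := by
  simp only [proj, _root_.map_smul, Submodule.coe_smul]

lemma proj_zero (V : Submodule ℝ (Mat d)) : proj V 0 = 0 := by
  have := proj_smul V 0 0
  simpa using this

lemma normInf_proj_le_norm1 (V : Submodule ℝ (Mat d)) (X : Mat d) :
    normInf (proj V X) ≤ norm1 X := by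
  set K := V.map ((matEuclid d) : Mat d →ₗ[ℝ] EuclideanSpace ℝ (Fin d × Fin d)) with hK
  refine normInf_le (norm1_nonneg X) fun i j => ?_
  have h1 : |proj V X i j| = |(matEuclid d (proj V X)) (i, j)| := rfl
  have h2 : matEuclid d (proj V X) =
      (Submodule.orthogonalProjectionOnto K ((matEuclid d) X) : EuclideanSpace ℝ (Fin d × Fin d)) := by
    rw [proj]
    exact (matEuclid d).apply_symm_apply _
  have h3 : ‖(Submodule.orthogonalProjectionOnto K ((matEuclid d) X) : EuclideanSpace ℝ (Fin d × Fin d))‖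
      ≤ ‖(matEuclid d) X‖ := by
    have h4 := (Submodule.orthogonalProjectionOnto K).le_opNorm ((matEuclid d) X)
    have h5 := Submodule.orthogonalProjectionOnto_norm_le K
    calc ‖(Submodule.orthogonalProjectionOnto K ((matEuclid d) X) : EuclideanSpace ℝ (Fin d × Fin d))‖
        = ‖Submodule.orthogonalProjectionOnto K ((matEuclid d) X)‖ := rfl
      _ ≤ ‖Submodule.orthogonalProjectionOnto K‖ * ‖(matEuclid d) X‖ := h4
      _ ≤ 1 * ‖(matEuclid d) X‖ :=
          mul_le_mul_of_nonneg_right h5 (norm_nonneg _)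
      _ = ‖(matEuclid d) X‖ := one_mul _
  have h6 : ‖(matEuclid d) X‖ ≤ norm1 X := by
    calc ‖(matEuclid d) X‖ ≤ ∑ pt : Fin d × Fin d, |(matEuclid d X) pt| :=
          euclid_norm_le_sum _
      _ = norm1 X := by rw [norm1, Fintype.sum_prod_type]; rfl
  calc |proj V X i j| = |(matEuclid d (proj V X)) (i, j)| := h1
    _ ≤ ‖matEuclid d (proj V X)‖ := euclid_abs_le _ _
    _ ≤ ‖(matEuclid d) X‖ := by rw [h2]; exact h3
    _ ≤ norm1 X := h6

lemma specNorm_proj_le (V : Submodule ℝ (Mat d)) (X : Mat d) :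
    specNorm (proj V X) ≤ ((d : ℝ)^2 * (d : ℝ)^2) * specNorm X := by
  calc specNorm (proj V X) ≤ (d : ℝ)^2 * normInf (proj V X) := specNorm_le_normInf _
    _ ≤ (d : ℝ)^2 * norm1 X :=
        mul_le_mul_of_nonneg_left (normInf_proj_le_norm1 V X) (by positivity)
    _ ≤ (d : ℝ)^2 * ((d : ℝ)^2 * normInf X) :=
        mul_le_mul_of_nonneg_left (norm1_le_normInf X) (by positivity)
    _ ≤ (d : ℝ)^2 * ((d : ℝ)^2 * specNorm X) := by
        refine mul_le_mul_of_nonneg_left (mul_le_mul_of_nonneg_left ?_ (by positivity))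
          (by positivity)
        exact normInf_le_specNorm X
    _ = ((d : ℝ)^2 * (d : ℝ)^2) * specNorm X := by ring

/-- Explicit orthogonal projection onto `OmegaS S`. -/
def projOmMat (S X : Mat d) : Mat d :=
  Matrix.of fun i j => if S i j = 0 then 0 else (X i j + X j i) / 2

lemma projOmMat_mem (S : Mat d) (hS : S.IsSymm) (X : Mat d) : projOmMat S X ∈ OmegaS S := by
  constructor
  · show (projOmMat S X)ᵀ = projOmMat S X
    ext i j
    simp only [Matrix.transpose_apply, projOmMat, Matrix.of_apply]
    rw [hS.apply i j, add_comm (X j i) (X i j)]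
  · intro i j h
    simp [projOmMat, h]

lemma proj_OmegaS (S : Mat d) (hS : S.IsSymm) (X : Mat d) :
    proj (OmegaS S) X = projOmMat S X := by
  refine proj_eq_of (projOmMat_mem S hS X) ?_
  rintro q ⟨hq, hq0⟩
  rw [minner_eq_sum]
  refine sum_antisym_eq_zero fun i j => ?_
  rcases eq_or_ne (S i j) 0 with h0 | h0
  · have h0' : S j i = 0 := by rw [← hS.apply j i]; exact h0
    rw [hq0 i j h0, hq0 j i h0', mul_zero, mul_zero, neg_zero]
  · have h0' : S j i ≠ 0 := by rw [← hS.apply j i]; exact h0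
    have hqs : q i j = q j i := (hq.apply i j).symm
    simp only [Matrix.sub_apply, projOmMat, Matrix.of_apply, if_neg h0, if_neg h0']
    rw [hqs]
    ring

lemma normInf_projOmMat_le (S X : Mat d) : normInf (projOmMat S X) ≤ normInf X := by
  refine normInf_le (normInf_nonneg X) fun i j => ?_
  simp only [projOmMat, Matrix.of_apply]
  rcases eq_or_ne (S i j) 0 with h0 | h0
  · rw [if_pos h0, abs_zero]
    exact normInf_nonneg X
  · rw [if_neg h0]
    have h1 : |(X i j + X j i) / 2| ≤ (|X i j| + |X j i|) / 2 := by
      rw [abs_div]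
      have := abs_add_le (X i j) (X j i)
      have h2 : |(2:ℝ)| = 2 := by norm_num
      rw [h2]
      linarith
    have h2 := abs_le_normInf X i j
    have h3 := abs_le_normInf X j i
    linarith

/-- Explicit orthogonal projection onto `TSpace U`. -/
def projTMat {r : ℕ} (U : Matrix (Fin d) (Fin r) ℝ) (X : Mat d) : Mat d :=
  U * Uᵀ * ((2:ℝ)⁻¹ • (X + Xᵀ)) + ((2:ℝ)⁻¹ • (X + Xᵀ)) * (U * Uᵀ)
    - U * Uᵀ * ((2:ℝ)⁻¹ • (X + Xᵀ)) * (U * Uᵀ)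

lemma symmPart_transpose (X : Mat d) :
    ((2:ℝ)⁻¹ • (X + Xᵀ))ᵀ = (2:ℝ)⁻¹ • (X + Xᵀ) := by
  rw [Matrix.transpose_smul, Matrix.transpose_add, Matrix.transpose_transpose,
    add_comm Xᵀ X]

lemma projTMat_mem {r : ℕ} (U : Matrix (Fin d) (Fin r) ℝ) (X : Mat d) :
    projTMat U X ∈ TSpace U := by
  set Xs : Mat d := (2:ℝ)⁻¹ • (X + Xᵀ) with hXsdef
  have hXs : Xsᵀ = Xs := symmPart_transpose X
  refine ⟨Xs * U - (2:ℝ)⁻¹ • (U * Uᵀ * Xs * U), ?_⟩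
  have hT : (Xs * U - (2:ℝ)⁻¹ • (U * Uᵀ * Xs * U))ᵀ
      = Uᵀ * Xs - (2:ℝ)⁻¹ • (Uᵀ * Xs * (U * Uᵀ)) := by
    rw [Matrix.transpose_sub, Matrix.transpose_mul, hXs, Matrix.transpose_smul]
    congr 1
    rw [Matrix.transpose_mul, Matrix.transpose_mul, Matrix.transpose_mul, hXs,
      Matrix.transpose_transpose]
    simp only [Matrix.mul_assoc]
  rw [hT]
  simp only [projTMat, ← hXsdef, Matrix.mul_sub, Matrix.sub_mul, Matrix.mul_smul,
    Matrix.smul_mul, Matrix.mul_assoc]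
  module

lemma one_sub_proj_mul {r : ℕ} {U : Matrix (Fin d) (Fin r) ℝ} (hU : Uᵀ * U = 1) :
    (1 - U * Uᵀ) * U = 0 := by
  rw [Matrix.sub_mul, Matrix.one_mul, Matrix.mul_assoc, hU, Matrix.mul_one, sub_self]

lemma mul_one_sub_proj {r : ℕ} {U : Matrix (Fin d) (Fin r) ℝ} (hU : Uᵀ * U = 1) :
    Uᵀ * (1 - U * Uᵀ) = 0 := by
  rw [Matrix.mul_sub, Matrix.mul_one, ← Matrix.mul_assoc, hU, Matrix.one_mul, sub_self]

lemma proj_TSpace {r : ℕ} {U : Matrix (Fin d) (Fin r) ℝ} (hU : Uᵀ * U = 1) (X : Mat d) :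
    proj (TSpace U) X = projTMat U X := by
  refine proj_eq_of (projTMat_mem U X) ?_
  rintro q ⟨Y, rfl⟩
  set Xs : Mat d := (2:ℝ)⁻¹ • (X + Xᵀ) with hXsdef
  have hXs : Xsᵀ = Xs := symmPart_transpose X
  set P : Mat d := U * Uᵀ with hPdef
  have hPT : Pᵀ = P := by rw [hPdef, Matrix.transpose_mul, Matrix.transpose_transpose]
  set A : Mat d := (1 - P) * Xs * (1 - P) with hAdef
  have hdecomp : X - projTMat U X = (X - Xs) + A := by
    rw [hAdef]
    have h1 : (1 - P) * Xs * (1 - P) = Xs - P * Xs - Xs * P + P * Xs * P := by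
      simp only [Matrix.sub_mul, Matrix.mul_sub, Matrix.one_mul, Matrix.mul_one]
      abel
    rw [h1]
    simp only [projTMat, ← hXsdef, ← hPdef]
    abel
  have hqsym : (U * Yᵀ + Y * Uᵀ)ᵀ = U * Yᵀ + Y * Uᵀ := by
    rw [Matrix.transpose_add, Matrix.transpose_mul, Matrix.transpose_mul,
      Matrix.transpose_transpose, Matrix.transpose_transpose, add_comm]
  rw [hdecomp, minner_add_left]
  have part1 : minner (X - Xs) (U * Yᵀ + Y * Uᵀ) = 0 := by
    rw [minner_eq_sum]
    refine sum_antisym_eq_zero fun i j => ?_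
    have hanti : (X - Xs) j i = -((X - Xs) i j) := by
      simp only [Matrix.sub_apply, hXsdef, Matrix.smul_apply, Matrix.add_apply,
        Matrix.transpose_apply, smul_eq_mul]
      ring
    have hsym : (U * Yᵀ + Y * Uᵀ) j i = (U * Yᵀ + Y * Uᵀ) i j :=
      congrFun (congrFun hqsym i) j
    rw [hanti, hsym]
    ring
  have hAT : Aᵀ = A := by
    rw [hAdef, Matrix.transpose_mul, Matrix.transpose_mul, hXs, Matrix.transpose_sub,
      Matrix.transpose_one, hPT, Matrix.mul_assoc]
  have hAU : A * U = 0 := by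
    rw [hAdef, Matrix.mul_assoc, Matrix.mul_assoc, one_sub_proj_mul hU,
      Matrix.mul_zero, Matrix.mul_zero]
  have hUA : Uᵀ * A = 0 := by
    rw [hAdef, ← Matrix.mul_assoc, ← Matrix.mul_assoc, mul_one_sub_proj hU,
      Matrix.zero_mul, Matrix.zero_mul]
  have part2 : minner A (U * Yᵀ + Y * Uᵀ) = 0 := by
    rw [minner, hAT, Matrix.mul_add, Matrix.trace_add]
    have t1 : A * (U * Yᵀ) = 0 := by
      rw [← Matrix.mul_assoc, hAU, Matrix.zero_mul]
    have t2 : (A * (Y * Uᵀ)).trace = 0 := by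
      rw [Matrix.trace_mul_comm, Matrix.mul_assoc, hUA, Matrix.mul_zero, Matrix.trace_zero]
    rw [t1, Matrix.trace_zero, t2, add_zero]
  rw [part1, part2, add_zero]

lemma specNorm_transpose (X : Mat d) : specNorm Xᵀ = specNorm X := by
  rw [specNorm_eq, specNorm_eq, ← Matrix.conjTranspose_eq_transpose_of_trivial,
    Matrix.l2_opNorm_conjTranspose]

lemma specNorm_symmPart_le (X : Mat d) : specNorm ((2:ℝ)⁻¹ • (X + Xᵀ)) ≤ specNorm X := by
  have h1 : specNorm ((2:ℝ)⁻¹ • (X + Xᵀ)) = |(2:ℝ)⁻¹| * specNorm (X + Xᵀ) := by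
    rw [specNorm_eq, specNorm_eq, norm_smul, Real.norm_eq_abs]
  have h2 : specNorm (X + Xᵀ) ≤ specNorm X + specNorm Xᵀ := by
    rw [specNorm_eq, specNorm_eq, specNorm_eq]
    exact norm_add_le _ _
  have h3 : |(2:ℝ)⁻¹| = 2⁻¹ := by norm_num
  rw [specNorm_transpose] at h2
  rw [h1, h3]
  linarith

lemma specNorm_proj_idem_le {r : ℕ} {U : Matrix (Fin d) (Fin r) ℝ} (hU : Uᵀ * U = 1) :
    specNorm (U * Uᵀ) ≤ 1 ∧ specNorm (1 - U * Uᵀ) ≤ 1 := by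
  set P : Mat d := U * Uᵀ with hPdef
  have hPT : Pᴴ = P := by
    rw [Matrix.conjTranspose_eq_transpose_of_trivial, hPdef, Matrix.transpose_mul,
      Matrix.transpose_transpose]
  have hPP : P * P = P := by
    rw [hPdef, Matrix.mul_assoc, ← Matrix.mul_assoc Uᵀ U Uᵀ, hU, Matrix.one_mul]
  have hQT : (1 - P)ᴴ = 1 - P := by
    rw [Matrix.conjTranspose_sub, hPT]
    congr 1
    simp
  have hQQ : (1 - P) * (1 - P) = 1 - P := by
    simp only [Matrix.sub_mul, Matrix.mul_sub, Matrix.one_mul, Matrix.mul_one, hPP]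
    abel
  constructor
  · rw [specNorm_eq]
    have := Matrix.l2_opNorm_conjTranspose_mul_self P
    rw [hPT, hPP] at this
    nlinarith [norm_nonneg P]
  · rw [specNorm_eq]
    have := Matrix.l2_opNorm_conjTranspose_mul_self (1 - P)
    rw [hQT, hQQ] at this
    nlinarith [norm_nonneg (1 - P)]

lemma specNorm_projTMat_le {r : ℕ} {U : Matrix (Fin d) (Fin r) ℝ} (hU : Uᵀ * U = 1)
    (X : Mat d) : specNorm (projTMat U X) ≤ 2 * specNorm X := by
  set Xs : Mat d := (2:ℝ)⁻¹ • (X + Xᵀ) with hXsdef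
  set P : Mat d := U * Uᵀ with hPdef
  have hsplit : projTMat U X = P * Xs + (1 - P) * Xs * P := by
    simp only [projTMat, ← hXsdef, ← hPdef, Matrix.sub_mul, Matrix.one_mul]
    abel
  obtain ⟨hP1, hQ1⟩ := specNorm_proj_idem_le hU
  have hXsle : specNorm Xs ≤ specNorm X := specNorm_symmPart_le X
  have hXs0 : (0:ℝ) ≤ specNorm Xs := by rw [specNorm_eq]; exact norm_nonneg _
  have hX0 : (0:ℝ) ≤ specNorm X := by rw [specNorm_eq]; exact norm_nonneg _
  have h1 : specNorm (P * Xs) ≤ specNorm Xs := by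
    have := Matrix.l2_opNorm_mul P Xs
    rw [← specNorm_eq, ← specNorm_eq, ← specNorm_eq] at this
    nlinarith
  have h2 : specNorm ((1 - P) * Xs * P) ≤ specNorm Xs := by
    have ha := Matrix.l2_opNorm_mul ((1 - P) * Xs) P
    have hb := Matrix.l2_opNorm_mul (1 - P) Xs
    rw [← specNorm_eq, ← specNorm_eq, ← specNorm_eq] at ha hb
    have hc : (0:ℝ) ≤ specNorm ((1 - P) * Xs) := by rw [specNorm_eq]; exact norm_nonneg _
    nlinarith
  have h3 : specNorm (P * Xs + (1 - P) * Xs * P)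
      ≤ specNorm (P * Xs) + specNorm ((1 - P) * Xs * P) := by
    rw [specNorm_eq, specNorm_eq, specNorm_eq]
    exact norm_add_le _ _
  rw [hsplit]
  linarith

lemma specNorm_nonneg (M : Mat d) : 0 ≤ specNorm M := by
  rw [specNorm_eq]; exact norm_nonneg _

lemma specNorm_zero : specNorm (0 : Mat d) = 0 := by
  rw [specNorm_eq]; exact norm_zero

lemma specNorm_pos {M : Mat d} (h : M ≠ 0) : 0 < specNorm M := by
  rw [specNorm_eq]; exact norm_pos_iff.mpr h

lemma specNorm_smul (c : ℝ) (M : Mat d) : specNorm (c • M) = |c| * specNorm M := by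
  rw [specNorm_eq, specNorm_eq, norm_smul, Real.norm_eq_abs]

lemma specNorm_add_le (A B : Mat d) : specNorm (A + B) ≤ specNorm A + specNorm B := by
  rw [specNorm_eq, specNorm_eq, specNorm_eq]; exact norm_add_le _ _

lemma specNorm_sub_le (A B : Mat d) : specNorm (A - B) ≤ specNorm A + specNorm B := by
  rw [specNorm_eq, specNorm_eq, specNorm_eq]; exact norm_sub_le _ _

lemma specNorm_sub_ge (A B : Mat d) : specNorm A - specNorm B ≤ specNorm (A + B) := by
  have h := specNorm_sub_le (A + B) B
  simp only [add_sub_cancel_right] at h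
  linarith

lemma normInf_zero : normInf (0 : Mat d) = 0 :=
  le_antisymm (normInf_le le_rfl (by simp)) (normInf_nonneg _)

lemma normInf_pos {M : Mat d} (h : M ≠ 0) : 0 < normInf M := by
  rcases (normInf_nonneg M).lt_or_eq with h1 | h1
  · exact h1
  · exact absurd (eq_zero_of_normInf_eq_zero h1.symm) h

lemma xi_spec {T : Submodule ℝ (Mat d)} {M : Mat d} (hM : M ∈ T) :
    normInf M ≤ xi T * specNorm M := by
  rcases eq_or_ne M 0 with rfl | hM0
  · simp [normInf_zero, specNorm_zero]
  · have hpos := specNorm_pos hM0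
    have hne : (1:ℝ) ∈ {c | ∀ N ∈ T, normInf N ≤ c * specNorm N} :=
      fun N _ => by simpa using normInf_le_specNorm N
    have hlow : normInf M / specNorm M ≤ xi T :=
      le_csInf ⟨1, hne⟩ fun c hc => by
        rw [div_le_iff₀ hpos]; exact hc M hM
    calc normInf M = normInf M / specNorm M * specNorm M := by field_simp
      _ ≤ xi T * specNorm M := mul_le_mul_of_nonneg_right hlow hpos.le

lemma xi_le_one {T : Submodule ℝ (Mat d)} {M₀ : Mat d} (hM₀ : M₀ ∈ T) (h0 : M₀ ≠ 0) :
    xi T ≤ 1 := by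
  refine csInf_le ⟨0, ?_⟩ (fun N _ => by simpa using normInf_le_specNorm N)
  rintro c hc
  have h1 := hc M₀ hM₀
  have h2 := normInf_pos h0
  have h3 := specNorm_pos h0
  nlinarith

lemma xi_pos {T : Submodule ℝ (Mat d)} {M₀ : Mat d} (hM₀ : M₀ ∈ T) (h0 : M₀ ≠ 0) :
    0 < xi T := by
  have h1 := xi_spec hM₀
  have h2 := normInf_pos h0
  have h3 := specNorm_pos h0
  nlinarith

lemma mu_spec {Om : Submodule ℝ (Mat d)} {M : Mat d} (hM : M ∈ Om) :
    specNorm M ≤ mu Om * normInf M := by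
  rcases eq_or_ne M 0 with rfl | hM0
  · simp [normInf_zero, specNorm_zero]
  · have hpos := normInf_pos hM0
    have hne : ((d:ℝ)^2) ∈ {c | ∀ N ∈ Om, specNorm N ≤ c * normInf N} :=
      fun N _ => specNorm_le_normInf N
    have hlow : specNorm M / normInf M ≤ mu Om :=
      le_csInf ⟨(d:ℝ)^2, hne⟩ fun c hc => by
        rw [div_le_iff₀ hpos]; exact hc M hM
    calc specNorm M = specNorm M / normInf M * normInf M := by field_simp
      _ ≤ mu Om * normInf M := mul_le_mul_of_nonneg_right hlow hpos.le

lemma mu_pos {Om : Submodule ℝ (Mat d)} {M₀ : Mat d} (hM₀ : M₀ ∈ Om) (h0 : M₀ ≠ 0) :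
    0 < mu Om := by
  have h1 := mu_spec hM₀
  have h2 := normInf_pos h0
  have h3 := specNorm_pos h0
  nlinarith

lemma rho_spec (T T' : Submodule ℝ (Mat d)) (N : Mat d) :
    specNorm (proj T N - proj T' N) ≤ rho T T' * specNorm N := by
  rcases eq_or_ne N 0 with rfl | hN0
  · simp [proj_zero, specNorm_zero]
  · have hpos := specNorm_pos hN0
    set c : ℝ := (specNorm N)⁻¹ with hc
    have hc0 : 0 < c := inv_pos.mpr hpos
    have hN' : specNorm (c • N) = 1 := by
      rw [specNorm_smul, abs_of_pos hc0, hc, inv_mul_cancel₀ hpos.ne']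
    have hb : BddAbove {t | ∃ M : Mat d, specNorm M = 1 ∧
        t = specNorm (proj T M - proj T' M)} := by
      refine ⟨2 * ((d:ℝ)^2 * (d:ℝ)^2), ?_⟩
      rintro t ⟨M, hM1, rfl⟩
      have h1 := specNorm_proj_le T M
      have h2 := specNorm_proj_le T' M
      have h3 := specNorm_sub_le (proj T M) (proj T' M)
      rw [hM1] at h1 h2
      linarith
    have hmem := le_csSup hb ⟨c • N, hN', rfl⟩
    have heq : proj T (c • N) - proj T' (c • N) = c • (proj T N - proj T' N) := by
      rw [proj_smul, proj_smul, smul_sub]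
    rw [heq, specNorm_smul, abs_of_pos hc0, hc] at hmem
    rw [rho] at *
    calc specNorm (proj T N - proj T' N)
        = (specNorm N)⁻¹ * specNorm (proj T N - proj T' N) * specNorm N := by
          field_simp
      _ ≤ rho T T' * specNorm N := by
          rw [rho]
          exact mul_le_mul_of_nonneg_right hmem hpos.le

variable {r : ℕ}

lemma Setup.Sstar_mem_Om (C : Setup d r) : C.Sstar ∈ C.Om :=
  ⟨C.hSsymm, fun _ _ h => h⟩

lemma Setup.Lstar_mem_Tt (C : Setup d r) : C.Lstar ∈ C.Tt := by
  refine ⟨(2:ℝ)⁻¹ • (C.U * C.Dg), ?_⟩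
  have hD : C.Dgᵀ = C.Dg := C.hDdiag.isSymm
  rw [Matrix.transpose_smul, Matrix.transpose_mul, hD, Matrix.mul_smul, Matrix.smul_mul]
  rw [Setup.Lstar, ← Matrix.mul_assoc]
  rw [← add_smul]
  norm_num

lemma Setup.Lstar_ne_zero (hr : 1 ≤ r) (C : Setup d r) : C.Lstar ≠ 0 := by
  intro h
  have h2 : C.Uᵀ * C.Lstar * C.U = C.Dg := by
    rw [Setup.Lstar, Matrix.mul_assoc C.U C.Dg C.Uᵀ, ← Matrix.mul_assoc C.Uᵀ C.U _, C.hU,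
      Matrix.one_mul, Matrix.mul_assoc, C.hU, Matrix.mul_one]
  rw [h, Matrix.mul_zero, Matrix.zero_mul] at h2
  have h3 := C.hDunit
  rw [← h2] at h3
  haveI : Nonempty (Fin r) := ⟨⟨0, hr⟩⟩
  rw [Matrix.det_zero] at h3
  simpa using h3

lemma Setup.xiT_pos (hr : 1 ≤ r) (C : Setup d r) : 0 < C.xiT :=
  xi_pos C.Lstar_mem_Tt (C.Lstar_ne_zero hr)

lemma Setup.xiT_le_one (hr : 1 ≤ r) (C : Setup d r) : C.xiT ≤ 1 :=
  xi_le_one C.Lstar_mem_Tt (C.Lstar_ne_zero hr)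

lemma Setup.muOm_pos (C : Setup d r) : 0 < C.muOm :=
  mu_pos C.Sstar_mem_Om C.hSne

lemma Setup.mu_bound (C : Setup d r) {M : Mat d} (hM : M ∈ C.Om) :
    specNorm M ≤ C.muOm * normInf M :=
  mu_spec hM

lemma Setup.alpha_Om_bound (C : Setup d r) {M : Mat d} (hM : M ∈ C.Om) :
    C.alphaOm * normInf M ≤ normInf (proj C.Om (C.Hop M)) := by
  rcases eq_or_ne M 0 with rfl | h0
  · simp [Setup.Hop, hessA_zero, proj_zero, normInf_zero]
  · have hpos := normInf_pos h0
    set c : ℝ := (normInf M)⁻¹ with hc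
    have hc0 : 0 < c := inv_pos.mpr hpos
    have hsmul : normInf (c • M) = 1 := by
      rw [normInf_smul, abs_of_pos hc0, hc, inv_mul_cancel₀ hpos.ne']
    have hbdd : BddBelow {t | ∃ M, M ∈ C.Om ∧ normInf M = 1 ∧
        t = normInf (proj C.Om (C.Hop M))} := by
      refine ⟨0, ?_⟩
      rintro t ⟨N, _, _, rfl⟩
      exact normInf_nonneg _
    have hmem := csInf_le hbdd ⟨c • M, Submodule.smul_mem _ c hM, hsmul, rfl⟩
    have heq : C.Hop (c • M) = c • C.Hop M := hessA_smul _ c M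
    rw [heq, proj_smul, normInf_smul, abs_of_pos hc0, hc] at hmem
    rw [Setup.alphaOm]
    rw [← le_div_iff₀ hpos] at *
    calc sInf _ ≤ (normInf M)⁻¹ * normInf (proj C.Om (C.Hop M)) := hmem
      _ = normInf (proj C.Om (C.Hop M)) / normInf M := by
          rw [inv_mul_eq_div]

lemma Setup.alpha_T_bound (C : Setup d r) {T' : Submodule ℝ (Mat d)}
    (hTan : IsTangentSpace d r T') (hrho : rho C.Tt T' ≤ C.xiT / 2) {N : Mat d}
    (hN : N ∈ T') :
    C.alphaT (C.xiT / 2) * specNorm N ≤ specNorm (proj T' (C.Hop N)) := by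
  rcases eq_or_ne N 0 with rfl | h0
  · simp [Setup.Hop, hessA_zero, proj_zero, specNorm_zero]
  · have hpos := specNorm_pos h0
    set c : ℝ := (specNorm N)⁻¹ with hc
    have hc0 : 0 < c := inv_pos.mpr hpos
    have hsmul : specNorm (c • N) = 1 := by
      rw [specNorm_smul, abs_of_pos hc0, hc, inv_mul_cancel₀ hpos.ne']
    have hbdd : BddBelow {t | ∃ T'' : Submodule ℝ (Mat d), IsTangentSpace d r T'' ∧
        rho C.Tt T'' ≤ C.xiT / 2 ∧ ∃ M, M ∈ T'' ∧ specNorm M = 1 ∧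
        t = specNorm (proj T'' (C.Hop M))} := by
      refine ⟨0, ?_⟩
      rintro t ⟨T'', _, _, M, _, _, rfl⟩
      exact specNorm_nonneg _
    have hmem := csInf_le hbdd
      ⟨T', hTan, hrho, c • N, Submodule.smul_mem _ c hN, hsmul, rfl⟩
    have heq : C.Hop (c • N) = c • C.Hop N := hessA_smul _ c N
    rw [heq, proj_smul, specNorm_smul, abs_of_pos hc0, hc] at hmem
    rw [Setup.alphaT, ← le_div_iff₀ hpos]
    calc sInf _ ≤ (specNorm N)⁻¹ * specNorm (proj T' (C.Hop N)) := hmem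
      _ = specNorm (proj T' (C.Hop N)) / specNorm N := by rw [inv_mul_eq_div]

lemma Setup.betaOm_bddAbove (C : Setup d r) : ∃ B : ℝ, ∀ t ∈
    {t | ∃ M, M ∈ C.Om ∧ specNorm M = 1 ∧ t = specNorm (C.Hop M)}, t ≤ B := by
  obtain ⟨K, hK0, hK⟩ := exists_hess_bound (d := d) C.Thstar
  refine ⟨K, ?_⟩
  rintro t ⟨M, _, h1, rfl⟩
  have := hK M
  rw [h1, mul_one] at this
  exact this

lemma Setup.betaOm_bound (C : Setup d r) {M : Mat d} (hM : M ∈ C.Om) :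
    specNorm (C.Hop M) ≤ C.betaOm * specNorm M := by
  obtain ⟨B, hB⟩ := C.betaOm_bddAbove
  rcases eq_or_ne M 0 with rfl | h0
  · simp [Setup.Hop, hessA_zero, specNorm_zero]
  · have hpos := specNorm_pos h0
    set c : ℝ := (specNorm M)⁻¹ with hc
    have hc0 : 0 < c := inv_pos.mpr hpos
    have hsmul : specNorm (c • M) = 1 := by
      rw [specNorm_smul, abs_of_pos hc0, hc, inv_mul_cancel₀ hpos.ne']
    have hel : specNorm (C.Hop (c • M)) ∈ {t | ∃ M, M ∈ C.Om ∧ specNorm M = 1 ∧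
        t = specNorm (C.Hop M)} := ⟨c • M, Submodule.smul_mem _ c hM, hsmul, rfl⟩
    have hBdd : BddAbove {t | ∃ M, M ∈ C.Om ∧ specNorm M = 1 ∧
        t = specNorm (C.Hop M)} := ⟨B, fun t ht => hB t ht⟩
    have hmem := le_csSup hBdd hel
    have heq : C.Hop (c • M) = c • C.Hop M := hessA_smul _ c M
    rw [heq, specNorm_smul, abs_of_pos hc0, hc] at hmem
    rw [Setup.betaOm, ← div_le_iff₀ hpos]
    calc specNorm (C.Hop M) / specNorm M = (specNorm M)⁻¹ * specNorm (C.Hop M) := by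
          rw [inv_mul_eq_div]
      _ ≤ sSup _ := hmem

lemma Setup.betaOm_nonneg (C : Setup d r) : 0 ≤ C.betaOm := by
  have h := C.betaOm_bound C.Sstar_mem_Om
  have h1 := specNorm_nonneg (C.Hop C.Sstar)
  have h2 := specNorm_pos C.hSne
  nlinarith

lemma Setup.betaT_bound (C : Setup d r) {T' : Submodule ℝ (Mat d)}
    (hTan : IsTangentSpace d r T') (hrho : rho C.Tt T' ≤ C.xiT / 2) {N : Mat d}
    (hN : N ∈ T') :
    normInf (C.Hop N) ≤ C.betaT * normInf N := by
  obtain ⟨K, hK0, hK⟩ := exists_hess_bound (d := d) C.Thstar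
  have hB : ∀ t ∈ {t | ∃ T'' : Submodule ℝ (Mat d), IsTangentSpace d r T'' ∧
      rho C.Tt T'' ≤ C.xiT / 2 ∧ ∃ M, M ∈ T'' ∧ normInf M = 1 ∧
      t = normInf (C.Hop M)}, t ≤ K * (d:ℝ)^2 := by
    rintro t ⟨T'', _, _, M, _, h1, rfl⟩
    calc normInf (C.Hop M) ≤ specNorm (C.Hop M) := normInf_le_specNorm _
      _ ≤ K * specNorm M := hK M
      _ ≤ K * ((d:ℝ)^2 * normInf M) :=
          mul_le_mul_of_nonneg_left (specNorm_le_normInf M) hK0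
      _ = K * (d:ℝ)^2 := by rw [h1, mul_one]
  rcases eq_or_ne N 0 with rfl | h0
  · simp [Setup.Hop, hessA_zero, normInf_zero]
  · have hpos := normInf_pos h0
    set c : ℝ := (normInf N)⁻¹ with hc
    have hc0 : 0 < c := inv_pos.mpr hpos
    have hsmul : normInf (c • N) = 1 := by
      rw [normInf_smul, abs_of_pos hc0, hc, inv_mul_cancel₀ hpos.ne']
    have hel : normInf (C.Hop (c • N)) ∈ {t | ∃ T'' : Submodule ℝ (Mat d),
        IsTangentSpace d r T'' ∧ rho C.Tt T'' ≤ C.xiT / 2 ∧ ∃ M, M ∈ T'' ∧ normInf M = 1 ∧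
        t = normInf (C.Hop M)} :=
      ⟨T', hTan, hrho, c • N, Submodule.smul_mem _ c hN, hsmul, rfl⟩
    have hBdd : BddAbove {t | ∃ T'' : Submodule ℝ (Mat d),
        IsTangentSpace d r T'' ∧ rho C.Tt T'' ≤ C.xiT / 2 ∧ ∃ M, M ∈ T'' ∧ normInf M = 1 ∧
        t = normInf (C.Hop M)} := ⟨K * (d:ℝ)^2, fun t ht => hB t ht⟩
    have hmem := le_csSup hBdd hel
    have heq : C.Hop (c • N) = c • C.Hop N := hessA_smul _ c N
    rw [heq, normInf_smul, abs_of_pos hc0, hc] at hmem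
    rw [Setup.betaT, ← div_le_iff₀ hpos]
    calc normInf (C.Hop N) / normInf N = (normInf N)⁻¹ * normInf (C.Hop N) := by
          rw [inv_mul_eq_div]
      _ ≤ sSup _ := hmem

lemma Setup.normInf_le_two_xi (hr : 1 ≤ r) (C : Setup d r) {T' : Submodule ℝ (Mat d)}
    (hrho : rho C.Tt T' ≤ C.xiT / 2) {N : Mat d} (hN : N ∈ T') :
    normInf N ≤ 2 * C.xiT * specNorm N := by
  have hxi1 : C.xiT ≤ 1 := C.xiT_le_one hr
  have hxi0 : 0 < C.xiT := C.xiT_pos hr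
  have hNfix : proj T' N = N := proj_of_mem hN
  have hs0 := specNorm_nonneg N
  have hrev : specNorm (N - proj C.Tt N) = specNorm (proj C.Tt N - proj T' N) := by
    rw [hNfix, specNorm_eq, specNorm_eq, norm_sub_rev]
  have h1 : normInf (N - proj C.Tt N) ≤ C.xiT / 2 * specNorm N := by
    calc normInf (N - proj C.Tt N) ≤ specNorm (N - proj C.Tt N) := normInf_le_specNorm _
      _ = specNorm (proj C.Tt N - proj T' N) := hrev
      _ ≤ rho C.Tt T' * specNorm N := rho_spec _ _ _
      _ ≤ C.xiT / 2 * specNorm N := mul_le_mul_of_nonneg_right hrho hs0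
  have h2 : specNorm (proj C.Tt N) ≤ (1 + C.xiT / 2) * specNorm N := by
    have ha : proj C.Tt N = N + (proj C.Tt N - N) := by abel
    have hb : specNorm (proj C.Tt N - N) ≤ C.xiT / 2 * specNorm N := by
      calc specNorm (proj C.Tt N - N) = specNorm (N - proj C.Tt N) := by
            rw [specNorm_eq, specNorm_eq, norm_sub_rev]
        _ = specNorm (proj C.Tt N - proj T' N) := hrev
        _ ≤ rho C.Tt T' * specNorm N := rho_spec _ _ _
        _ ≤ C.xiT / 2 * specNorm N := mul_le_mul_of_nonneg_right hrho hs0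
    calc specNorm (proj C.Tt N) = specNorm (N + (proj C.Tt N - N)) := by rw [← ha]
      _ ≤ specNorm N + specNorm (proj C.Tt N - N) := specNorm_add_le _ _
      _ ≤ (1 + C.xiT / 2) * specNorm N := by linarith
  have h3 : normInf (proj C.Tt N) ≤ C.xiT * specNorm (proj C.Tt N) :=
    xi_spec (proj_mem _ _)
  have h4 : normInf N ≤ normInf (proj C.Tt N) + normInf (N - proj C.Tt N) := by
    have ha : N = proj C.Tt N + (N - proj C.Tt N) := by abel
    calc normInf N = normInf (proj C.Tt N + (N - proj C.Tt N)) := by rw [← ha]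
      _ ≤ _ := normInf_add_le _ _
  have h5 : C.xiT * specNorm (proj C.Tt N) ≤ C.xiT * ((1 + C.xiT / 2) * specNorm N) :=
    mul_le_mul_of_nonneg_left h2 hxi0.le
  nlinarith [mul_nonneg (mul_nonneg hxi0.le hs0) (sub_nonneg.mpr hxi1)]

end Aux
set_option maxHeartbeats 2000000 in
/-- Proposition 1(a), coupled stability, minimum gain: under the stability
and γ-feasibility assumptions, for `γ ∈ [γ_min, γ_max]` and every tangent space `T'`
with `ρ(T,T') ≤ ξ(T)/2`, the minimum gain of `H*` on `Ω ⊕ T'` is bounded below: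
`‖P_Y D H*(M+N)‖_γ ≥ (α/2)‖(M,N)‖_γ` for all `(M,N) ∈ Ω × T'`. -/
theorem coupled_stability_minimum_gain (d r : ℕ) (hd : 1 ≤ d) (hr : 1 ≤ r)
    (C : Setup d r) (ν γ : ℝ) (hstab : C.Stability ν) (hfeas : C.GammaFeasible ν)
    (hγ : γ ∈ Set.Icc (C.gammaMin ν) (C.gammaMax ν)) :
    ∀ T' : Submodule ℝ (Mat d), IsTangentSpace d r T' → rho C.Tt T' ≤ C.xiT / 2 →
      ∀ M N : Mat d, M ∈ C.Om → N ∈ T' →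
        C.alphaC / 2 * ganorm γ M N ≤
          ganorm γ (proj C.Om (C.Hop (M + N))) (proj T' (C.Hop (M + N))) := by
  obtain ⟨hα, hν0, hν2, hδ⟩ := hstab
  intro T' hTan hrho M N hM hN
  obtain ⟨U', D', hU', -, -, hT'eq⟩ := id hTan
  have hm0 : 0 ≤ normInf M := normInf_nonneg M
  have hn0 : 0 ≤ specNorm N := specNorm_nonneg N
  have hξ0 : 0 < C.xiT := C.xiT_pos hr
  have hμ0 : 0 < C.muOm := C.muOm_pos
  have hβ0 : 0 ≤ C.betaC := le_trans C.betaOm_nonneg (le_max_left _ _)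
  have hαOm : C.alphaC ≤ C.alphaOm := by rw [Setup.alphaC]; exact min_le_left _ _
  have hαT : C.alphaC ≤ C.alphaT (C.xiT / 2) := by
    rw [Setup.alphaC]; exact min_le_right _ _
  have hsplit : C.Hop (M + N) = C.Hop M + C.Hop N := hessA_add _ M N
  -- lower bound for the Ω component
  have hOmsplit : proj C.Om (C.Hop (M + N)) =
      proj C.Om (C.Hop M) + proj C.Om (C.Hop N) := by rw [hsplit, proj_add]
  have hF1 : C.alphaC * normInf M ≤ normInf (proj C.Om (C.Hop M)) :=
    le_trans (mul_le_mul_of_nonneg_right hαOm hm0) (C.alpha_Om_bound hM)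
  have hprojOmN : normInf (proj C.Om (C.Hop N)) ≤ normInf (C.Hop N) := by
    have h := proj_OmegaS C.Sstar C.hSsymm (C.Hop N)
    rw [Setup.Om, h]
    exact normInf_projOmMat_le _ _
  have hHN : normInf (C.Hop N) ≤ C.betaC * (2 * C.xiT * specNorm N) := by
    calc normInf (C.Hop N) ≤ C.betaT * normInf N := C.betaT_bound hTan hrho hN
      _ ≤ C.betaC * normInf N :=
          mul_le_mul_of_nonneg_right (le_max_right _ _) (normInf_nonneg N)
      _ ≤ C.betaC * (2 * C.xiT * specNorm N) :=
          mul_le_mul_of_nonneg_left (C.normInf_le_two_xi hr hrho hN) hβ0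
  have hF5 : C.alphaC * normInf M - 2 * C.betaC * C.xiT * specNorm N ≤
      normInf (proj C.Om (C.Hop (M + N))) := by
    have h := normInf_sub_le (proj C.Om (C.Hop M)) (proj C.Om (C.Hop N))
    rw [hOmsplit]
    have hring : C.betaC * (2 * C.xiT * specNorm N)
        = 2 * C.betaC * C.xiT * specNorm N := by ring
    linarith [hring ▸ hHN]
  -- lower bound for the T' component
  have hT'split : proj T' (C.Hop (M + N)) =
      proj T' (C.Hop M) + proj T' (C.Hop N) := by rw [hsplit, proj_add]
  have hF2 : C.alphaC * specNorm N ≤ specNorm (proj T' (C.Hop N)) :=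
    le_trans (mul_le_mul_of_nonneg_right hαT hn0) (C.alpha_T_bound hTan hrho hN)
  have hprojT'M : specNorm (proj T' (C.Hop M)) ≤ 2 * specNorm (C.Hop M) := by
    rw [hT'eq, proj_TSpace hU']
    exact specNorm_projTMat_le hU' _
  have hHM : specNorm (C.Hop M) ≤ C.betaC * (C.muOm * normInf M) := by
    calc specNorm (C.Hop M) ≤ C.betaOm * specNorm M := C.betaOm_bound hM
      _ ≤ C.betaC * specNorm M :=
          mul_le_mul_of_nonneg_right (le_max_left _ _) (specNorm_nonneg M)
      _ ≤ C.betaC * (C.muOm * normInf M) :=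
          mul_le_mul_of_nonneg_left (C.mu_bound hM) hβ0
  have hF6 : C.alphaC * specNorm N - 2 * C.betaC * C.muOm * normInf M ≤
      specNorm (proj T' (C.Hop (M + N))) := by
    have h := specNorm_sub_ge (proj T' (C.Hop N)) (proj T' (C.Hop M))
    rw [hT'split, add_comm (proj T' (C.Hop M)) (proj T' (C.Hop N))]
    have hring : 2 * (C.betaC * (C.muOm * normInf M))
        = 2 * C.betaC * C.muOm * normInf M := by ring
    linarith [hring ▸ (mul_le_mul_of_nonneg_left hHM (by norm_num : (0:ℝ) ≤ 2)), hprojT'M]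
  have ha0 : 0 ≤ normInf (proj C.Om (C.Hop (M + N))) := normInf_nonneg _
  have hb0 : 0 ≤ specNorm (proj T' (C.Hop (M + N))) := specNorm_nonneg _
  simp only [ganorm]
  rcases hβ0.lt_or_eq with hβpos | hβzero
  · -- case β > 0
    have hγmin := hγ.1
    have hγmax := hγ.2
    rw [Setup.gammaMin] at hγmin
    rw [Setup.gammaMax] at hγmax
    have hνα : 0 < ν * C.alphaC := mul_pos hν0 hα
    have h2ν : (0:ℝ) < 2 - ν := by linarith
    have hγ0 : 0 < γ := by
      refine lt_of_lt_of_le (div_pos ?_ hνα) hγmin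
      exact mul_pos (mul_pos (mul_pos (by norm_num) hβpos) h2ν) hξ0
    have hγmin' : 3 * C.betaC * (2 - ν) * C.xiT ≤ γ * (ν * C.alphaC) := by
      rwa [div_le_iff₀ hνα] at hγmin
    have hden : 0 < 2 * C.betaC * (2 - ν) * C.muOm :=
      mul_pos (mul_pos (mul_pos (by norm_num) hβpos) h2ν) hμ0
    have hγmax' : γ * (2 * C.betaC * (2 - ν) * C.muOm) ≤ ν * C.alphaC := by
      rwa [le_div_iff₀ hden] at hγmax
    have key1 : 2 * C.betaC * C.xiT ≤ 2 / 9 * (C.alphaC * γ) := by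
      have e1 : 9 / 2 * (C.betaC * C.xiT) ≤ γ * (ν * C.alphaC) := by
        nlinarith [hγmin', mul_nonneg (mul_nonneg hβ0 hξ0.le)
          (show (0:ℝ) ≤ 3 / 2 - 3 * ν + 3 * ν from by linarith),
          mul_nonneg (mul_nonneg hβ0 hξ0.le) (show (0:ℝ) ≤ 3 / 2 - 3 * ν from by linarith)]
      have e2 : γ * (ν * C.alphaC) ≤ γ * C.alphaC / 2 := by
        nlinarith [mul_nonneg (mul_nonneg hγ0.le hα.le)
          (show (0:ℝ) ≤ 1 / 2 - ν from by linarith)]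
      nlinarith [e1, e2]
    have key2 : 2 * C.betaC * C.muOm * γ ≤ C.alphaC / 3 := by
      have f1 : 3 * (C.betaC * C.muOm * γ) ≤ γ * (2 * C.betaC * (2 - ν) * C.muOm) := by
        nlinarith [mul_nonneg (mul_nonneg (mul_nonneg hβ0 hμ0.le) hγ0.le)
          (show (0:ℝ) ≤ 1 - 2 * ν from by linarith)]
      have f2 : ν * C.alphaC ≤ C.alphaC / 2 := by
        nlinarith [mul_nonneg hα.le (show (0:ℝ) ≤ 1 / 2 - ν from by linarith)]
      nlinarith [f1, f2, hγmax']
    rcases le_total (specNorm N) (normInf M / γ) with hcase | hcase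
    · -- sparse component dominates
      rw [max_eq_left hcase]
      refine le_trans ?_ (le_max_left _ _)
      have hkey : C.alphaC / 2 * normInf M ≤ normInf (proj C.Om (C.Hop (M + N))) := by
        have h1 : 2 * C.betaC * C.xiT * specNorm N
            ≤ 2 / 9 * (C.alphaC * γ) * (normInf M / γ) :=
          mul_le_mul key1 hcase hn0
            (mul_nonneg (by norm_num) (mul_nonneg hα.le hγ0.le))
        have h2 : 2 / 9 * (C.alphaC * γ) * (normInf M / γ)
            = 2 / 9 * (C.alphaC * normInf M) := by
          field_simp
        have h3 : 2 * C.betaC * C.xiT * specNorm N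
            ≤ 2 / 9 * (C.alphaC * normInf M) := h2 ▸ h1
        have r1 : C.alphaC / 2 * normInf M = 1 / 2 * (C.alphaC * normInf M) := by ring
        rw [r1]
        linarith [hF5, h3, mul_nonneg hα.le hm0]
      have heq : C.alphaC / 2 * (normInf M / γ)
          = C.alphaC / 2 * normInf M / γ := by ring
      rw [heq]
      gcongr
    · -- low-rank component dominates
      rw [max_eq_right hcase]
      refine le_trans ?_ (le_max_right _ _)
      have hmγ : normInf M ≤ γ * specNorm N := by
        rw [div_le_iff₀ hγ0] at hcase
        linarith
      have h1 : 2 * C.betaC * C.muOm * normInf M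
          ≤ 2 * C.betaC * C.muOm * (γ * specNorm N) :=
        mul_le_mul_of_nonneg_left hmγ
          (mul_nonneg (mul_nonneg (by norm_num) hβ0) hμ0.le)
      have h2 : 2 * C.betaC * C.muOm * γ * specNorm N ≤ C.alphaC / 3 * specNorm N :=
        mul_le_mul_of_nonneg_right key2 hn0
      have r : 2 * C.betaC * C.muOm * (γ * specNorm N)
          = 2 * C.betaC * C.muOm * γ * specNorm N := by ring
      rw [r] at h1
      have r1 : C.alphaC / 2 * specNorm N = 1 / 2 * (C.alphaC * specNorm N) := by ring
      have r2 : C.alphaC / 3 * specNorm N = 1 / 3 * (C.alphaC * specNorm N) := by ring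
      rw [r2] at h2
      rw [r1]
      linarith [hF6, h1, h2, mul_nonneg hα.le hn0]
  · -- case β = 0
    have hβz : C.betaC = 0 := hβzero.symm
    rw [hβz] at hF6
    have hF6' : C.alphaC * specNorm N ≤ specNorm (proj T' (C.Hop (M + N))) := by
      have hz : 2 * 0 * C.muOm * normInf M = 0 := by ring
      linarith [hz ▸ hF6]
    have hγmin := hγ.1
    have hγmax := hγ.2
    rw [Setup.gammaMin, hβz] at hγmin
    rw [Setup.gammaMax, hβz] at hγmax
    norm_num at hγmin hγmax
    have hγ0 : γ = 0 := le_antisymm hγmax hγmin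
    subst hγ0
    simp only [div_zero]
    rw [max_eq_right hn0, max_eq_right hb0]
    have r1 : C.alphaC / 2 * specNorm N = 1 / 2 * (C.alphaC * specNorm N) := by ring
    rw [r1]
    linarith [hF6', mul_nonneg hα.le hn0]

end IsingSL
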